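/- Let d ≥ 1, m ≥ 1, let Ω ⊆ ℝ^d be open, and let f : Ω → ℝ^m be continuously differentiable. Let v : Ω → ℝ^d × ℝ^m be a continuously differentiable nowhere-vanishing vector field along the graph of f, and suppose the line field it spans is not everywhere tangent to the graph: there exists x₀ ∈ Ω such that v(x₀) ∉ {(u, Df(x₀)u) : u ∈ ℝ^d}. Then the union of the corresponding affine lines, L := {(x, f(x)) + t·v(x) : x ∈ Ω, t ∈ ℝ} ⊆ ℝ^d × ℝ^m, satisfies ℋ^{d+1}(L) > 0, where ℋ^{d+1} is the (d+1)-dimensional Hausdorff measure. Moreover, if m = 1 (the graph is a hypersurface), then L has nonempty interior. -/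

import Mathlib

open MeasureTheory Set Filter Module
open scoped NNReal ENNReal Topology

/-- Auxiliary lemma: if `Φ` has an injective strict derivative at a point of an open set `U`,
then the image `Φ '' U` has positive Hausdorff measure in dimension `finrank ℝ E`. -/
lemma aux_pos_image {E F : Type*} [NormedAddCommGroup E] [NormedSpace ℝ E]
    [FiniteDimensional ℝ E] [Nontrivial E] [MeasurableSpace E] [BorelSpace E]
    [NormedAddCommGroup F] [NormedSpace ℝ F] [FiniteDimensional ℝ F]
    [MeasurableSpace F] [BorelSpace F]
    (Φ : E → F) (p₀ : E) (A : E →L[ℝ] F) (hΦ : HasStrictFDerivAt Φ A p₀)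
    (hA : Function.Injective A) (U : Set E) (hU : IsOpen U) (hp₀ : p₀ ∈ U) :
    0 < μH[(finrank ℝ E : ℝ)] (Φ '' U) := by
  classical
  -- left inverse of A
  obtain ⟨B₀, hB₀⟩ := (A : E →ₗ[ℝ] F).exists_leftInverse_of_injective
    (LinearMap.ker_eq_bot.mpr (by simpa using hA))
  set B : F →L[ℝ] E := B₀.toContinuousLinearMap with hB
  have hBA : ∀ z, B (A z) = z := fun z => by
    have := LinearMap.congr_fun hB₀ z
    simpa [hB] using this
  have hG : HasStrictFDerivAt (fun p => B (Φ p)) (B.comp A) p₀ :=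
    B.hasStrictFDerivAt.comp p₀ hΦ
  have hBAid : B.comp A = ((ContinuousLinearEquiv.refl ℝ E : E ≃L[ℝ] E) : E →L[ℝ] E) :=
    ContinuousLinearMap.ext fun z => by simpa using hBA z
  rw [hBAid] at hG
  obtain ⟨s, hs, happ⟩ := hG.approximates_deriv_on_nhds (c := 2⁻¹) (Or.inr (by norm_num))
  have h2 : (2⁻¹ : ℝ≥0) <
      ‖(((ContinuousLinearEquiv.refl ℝ E).symm : E ≃L[ℝ] E) : E →L[ℝ] E)‖₊⁻¹ := by
    simp only [ContinuousLinearEquiv.refl_symm, ContinuousLinearEquiv.coe_refl,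
      ContinuousLinearMap.nnnorm_id]
    exact NNReal.coe_lt_coe.mp (by norm_num)
  have hanti := happ.antilipschitz (Or.inr h2)
  set K : ℝ≥0 :=
    (‖(((ContinuousLinearEquiv.refl ℝ E).symm : E ≃L[ℝ] E) : E →L[ℝ] E)‖₊⁻¹ - 2⁻¹)⁻¹ with hK
  -- Work on an open neighborhood W ⊆ s ∩ U
  set W : Set E := interior s ∩ U with hW
  have hWopen : IsOpen W := isOpen_interior.inter hU
  have hp₀W : p₀ ∈ W := ⟨mem_interior_iff_mem_nhds.mpr hs, hp₀⟩
  have hWs : W ⊆ s := fun x hx => interior_subset hx.1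
  -- Φ is antilipschitz on W
  have hantiΦ : AntilipschitzWith (K * ‖B‖₊) (W.restrict Φ) := by
    intro x y
    calc edist x y = edist (⟨x.1, hWs x.2⟩ : s) (⟨y.1, hWs y.2⟩ : s) := rfl
      _ ≤ K * edist (B (Φ x.1)) (B (Φ y.1)) := hanti _ _
      _ ≤ K * (‖B‖₊ * edist (Φ x.1) (Φ y.1)) := by
          gcongr
          exact B.lipschitz _ _
      _ = (↑(K * ‖B‖₊) : ℝ≥0∞) * edist ((W.restrict Φ) x) ((W.restrict Φ) y) := by
          rw [ENNReal.coe_mul, mul_assoc]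
          rfl
  have hd0 : (0 : ℝ) ≤ (finrank ℝ E : ℝ) := Nat.cast_nonneg _
  -- identify the measure of W with that of (univ : Set W)
  have hiso : μH[(finrank ℝ E : ℝ)] (W : Set E) = μH[(finrank ℝ E : ℝ)] (univ : Set W) := by
    conv_lhs => rw [← Subtype.coe_image_univ W]
    exact Isometry.hausdorffMeasure_image (f := ((↑) : W → E)) (fun x y => rfl) (Or.inl hd0) _
  have h1 : μH[(finrank ℝ E : ℝ)] (W : Set E) ≤
      (↑(K * ‖B‖₊) : ℝ≥0∞) ^ (finrank ℝ E : ℝ) * μH[(finrank ℝ E : ℝ)] (Φ '' W) := by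
    have him := hantiΦ.le_hausdorffMeasure_image hd0 univ
    rw [image_univ, show range (W.restrict Φ) = Φ '' W from range_domRestrict Φ W] at him
    rw [hiso]
    exact him
  have hWpos : 0 < μH[(finrank ℝ E : ℝ)] (W : Set E) :=
    hWopen.measure_pos _ ⟨p₀, hp₀W⟩
  have hΦWpos : 0 < μH[(finrank ℝ E : ℝ)] (Φ '' W) := by
    rcases eq_or_ne (μH[(finrank ℝ E : ℝ)] (Φ '' W)) 0 with h0 | h0
    · exact absurd (h1.trans_eq (by rw [h0, mul_zero])) hWpos.not_ge
    · exact h0.bot_lt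
  exact hΦWpos.trans_le (measure_mono (image_mono (f := Φ) inter_subset_right))

/-- a C¹ line field along the graph of a C¹ map f : Ω ⊆ ℝ^d → ℝ^m that is
somewhere non-tangent to the graph sweeps out a set of positive (d+1)-dimensional
Hausdorff measure; if moreover m = 1 the swept set has nonempty interior. -/
theorem stmt_13 (d m : ℕ) (hd : 1 ≤ d) (hm : 1 ≤ m)
    (Ω : Set (EuclideanSpace ℝ (Fin d))) (hΩ : IsOpen Ω)
    (f : EuclideanSpace ℝ (Fin d) → EuclideanSpace ℝ (Fin m))
    (hf : ContDiffOn ℝ 1 f Ω)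
    (v : EuclideanSpace ℝ (Fin d) →
      EuclideanSpace ℝ (Fin d) × EuclideanSpace ℝ (Fin m))
    (hv : ContDiffOn ℝ 1 v Ω)
    (hv0 : ∀ x ∈ Ω, v x ≠ 0)
    (hnontang : ∃ x₀ ∈ Ω, v x₀ ∉
      {p : EuclideanSpace ℝ (Fin d) × EuclideanSpace ℝ (Fin m) |
        ∃ u : EuclideanSpace ℝ (Fin d), p = (u, fderiv ℝ f x₀ u)}) :
    0 < μH[(d + 1 : ℝ)] {p : EuclideanSpace ℝ (Fin d) × EuclideanSpace ℝ (Fin m) |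
        ∃ x ∈ Ω, ∃ t : ℝ, p = (x, f x) + t • v x} ∧
    (m = 1 → (interior {p : EuclideanSpace ℝ (Fin d) × EuclideanSpace ℝ (Fin m) |
        ∃ x ∈ Ω, ∃ t : ℝ, p = (x, f x) + t • v x}).Nonempty) := by
  classical
  obtain ⟨x₀, hx₀Ω, hnt⟩ := hnontang
  set L := {p : EuclideanSpace ℝ (Fin d) × EuclideanSpace ℝ (Fin m) |
      ∃ x ∈ Ω, ∃ t : ℝ, p = (x, f x) + t • v x} with hLdef
  set Φ : (EuclideanSpace ℝ (Fin d) × ℝ) →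
      EuclideanSpace ℝ (Fin d) × EuclideanSpace ℝ (Fin m) :=
    fun p => (p.1, f p.1) + p.2 • v p.1 with hΦdef
  set p₀ : EuclideanSpace ℝ (Fin d) × ℝ := (x₀, 0) with hp₀def
  have hfd : HasStrictFDerivAt f (fderiv ℝ f x₀) x₀ :=
    (hf.contDiffAt (hΩ.mem_nhds hx₀Ω)).hasStrictFDerivAt one_ne_zero
  have hvd : HasStrictFDerivAt v (fderiv ℝ v x₀) x₀ :=
    (hv.contDiffAt (hΩ.mem_nhds hx₀Ω)).hasStrictFDerivAt one_ne_zero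
  set A : (EuclideanSpace ℝ (Fin d) × ℝ) →L[ℝ]
      EuclideanSpace ℝ (Fin d) × EuclideanSpace ℝ (Fin m) :=
    ((ContinuousLinearMap.fst ℝ (EuclideanSpace ℝ (Fin d)) ℝ).prod
      ((fderiv ℝ f x₀).comp (ContinuousLinearMap.fst ℝ (EuclideanSpace ℝ (Fin d)) ℝ)))
      + (ContinuousLinearMap.snd ℝ (EuclideanSpace ℝ (Fin d)) ℝ).smulRight (v x₀) with hAdef
  have h1 : HasStrictFDerivAt (fun p : EuclideanSpace ℝ (Fin d) × ℝ => p.1)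
      (ContinuousLinearMap.fst ℝ (EuclideanSpace ℝ (Fin d)) ℝ) p₀ := hasStrictFDerivAt_fst
  have h2 : HasStrictFDerivAt (fun p : EuclideanSpace ℝ (Fin d) × ℝ => f p.1)
      ((fderiv ℝ f x₀).comp (ContinuousLinearMap.fst ℝ (EuclideanSpace ℝ (Fin d)) ℝ)) p₀ :=
    hfd.comp p₀ h1
  have h3 : HasStrictFDerivAt (fun p : EuclideanSpace ℝ (Fin d) × ℝ => v p.1)
      ((fderiv ℝ v x₀).comp (ContinuousLinearMap.fst ℝ (EuclideanSpace ℝ (Fin d)) ℝ)) p₀ :=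
    hvd.comp p₀ h1
  have h4 : HasStrictFDerivAt (fun p : EuclideanSpace ℝ (Fin d) × ℝ => p.2)
      (ContinuousLinearMap.snd ℝ (EuclideanSpace ℝ (Fin d)) ℝ) p₀ := hasStrictFDerivAt_snd
  have hΦA : HasStrictFDerivAt Φ A p₀ := by
    have h5 := HasStrictFDerivAt.add (HasStrictFDerivAt.prodMk h1 h2) (HasStrictFDerivAt.smul h4 h3)
    simp [hΦdef, hAdef, hp₀def] at h5
    exact h5
  have hAinj : Function.Injective A := by
    refine (injective_iff_map_eq_zero (A :
        (EuclideanSpace ℝ (Fin d) × ℝ) →L[ℝ] _)).mpr ?_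
    rintro ⟨u, s⟩ hz
    rw [hAdef] at hz
    have hz1 : u + s • (v x₀).1 = 0 := congrArg Prod.fst hz
    have hz2 : fderiv ℝ f x₀ u + s • (v x₀).2 = 0 := congrArg Prod.snd hz
    by_cases hs : s = 0
    · subst hs
      simp only [zero_smul, add_zero] at hz1
      simp [Prod.ext_iff, hz1]
    · exfalso
      apply hnt
      refine ⟨(-s⁻¹) • u, ?_⟩
      have hv1 : (v x₀).1 = (-s⁻¹) • u := by
        have : s • (v x₀).1 = -u := by
          rw [eq_neg_iff_add_eq_zero, add_comm]; exact hz1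
        calc (v x₀).1 = s⁻¹ • (s • (v x₀).1) := by
              rw [smul_smul, inv_mul_cancel₀ hs, one_smul]
          _ = s⁻¹ • (-u) := by rw [this]
          _ = (-s⁻¹) • u := by rw [smul_neg, neg_smul]
      have hv2 : (v x₀).2 = fderiv ℝ f x₀ ((-s⁻¹) • u) := by
        have h6 : s • (v x₀).2 = -(fderiv ℝ f x₀ u) := by
          rw [eq_neg_iff_add_eq_zero, add_comm]; exact hz2
        calc (v x₀).2 = s⁻¹ • (s • (v x₀).2) := by
              rw [smul_smul, inv_mul_cancel₀ hs, one_smul]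
          _ = s⁻¹ • (-(fderiv ℝ f x₀ u)) := by rw [h6]
          _ = fderiv ℝ f x₀ ((-s⁻¹) • u) := by
              rw [_root_.map_smul, smul_neg, neg_smul]
      exact Prod.ext hv1 hv2
  haveI : Nontrivial (EuclideanSpace ℝ (Fin d) × ℝ) :=
    ⟨⟨(0, 0), (0, 1), by simp [Prod.ext_iff]⟩⟩
  have hUopen : IsOpen (Ω ×ˢ (univ : Set ℝ)) := hΩ.prod isOpen_univ
  have hp₀U : p₀ ∈ Ω ×ˢ (univ : Set ℝ) := ⟨hx₀Ω, trivial⟩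
  have hsubL : Φ '' (Ω ×ˢ (univ : Set ℝ)) ⊆ L := by
    rintro _ ⟨⟨x, t⟩, ⟨hxΩ, -⟩, rfl⟩
    exact ⟨x, hxΩ, t, rfl⟩
  constructor
  · have key := aux_pos_image Φ p₀ A hΦA hAinj (Ω ×ˢ (univ : Set ℝ)) hUopen hp₀U
    have hrank : ((finrank ℝ (EuclideanSpace ℝ (Fin d) × ℝ) : ℕ) : ℝ) = (d + 1 : ℝ) := by
      rw [Module.finrank_prod, finrank_euclideanSpace_fin, Module.finrank_self]
      push_cast
      ring
    rw [hrank] at key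
    exact key.trans_le (measure_mono hsubL)
  · intro hm1
    subst hm1
    have hrk : finrank ℝ (EuclideanSpace ℝ (Fin d) × ℝ) =
        finrank ℝ (EuclideanSpace ℝ (Fin d) × EuclideanSpace ℝ (Fin 1)) := by
      rw [Module.finrank_prod, Module.finrank_prod, finrank_euclideanSpace_fin,
        finrank_euclideanSpace_fin, Module.finrank_self]
    have hAinj' : Function.Injective A.toLinearMap := by
      simpa using hAinj
    set e : (EuclideanSpace ℝ (Fin d) × ℝ) ≃L[ℝ]
        (EuclideanSpace ℝ (Fin d) × EuclideanSpace ℝ (Fin 1)) :=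
      (A.toLinearMap.linearEquivOfInjective hAinj'
        hrk).toContinuousLinearEquiv with hedef
    have he : (e : (EuclideanSpace ℝ (Fin d) × ℝ) →L[ℝ] _) = A := by
      apply ContinuousLinearMap.ext
      intro z
      simp [hedef, LinearEquiv.coe_toContinuousLinearEquiv',
        LinearMap.linearEquivOfInjective_apply]
    have hΦe : HasStrictFDerivAt Φ
        (e : (EuclideanSpace ℝ (Fin d) × ℝ) →L[ℝ] _) p₀ := by
      rw [he]; exact hΦA
    have hmap := hΦe.map_nhds_eq_of_equiv
    have hLmem : L ∈ nhds (Φ p₀) := by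
      rw [← hmap, Filter.mem_map]
      exact Filter.mem_of_superset (hUopen.mem_nhds hp₀U) fun p hp => hsubL ⟨p, hp, rfl⟩
    exact ⟨Φ p₀, mem_interior_iff_mem_nhds.mpr hLmem⟩
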